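/- For all integers m ≥ 0 and n ≥ 0, the number of elements of Q_4(m,n) is at most the number of elements of P_4(−m,n). -/

import Mathlib

noncomputable section

/-- The i-th largest part (1-indexed) of a partition, represented as a
multiset of parts; `0` if `i` exceeds the number of parts. -/
def partAt (mu : Multiset ℕ) (i : ℕ) : ℕ :=
  (mu.sort (· ≥ ·)).getD (i - 1) 0

/-- The smallest part of a partition, with the convention that the smallest
part of the empty partition is `+∞`. -/
def sMin (mu : Multiset ℕ) : ℕ∞ := (mu.map ((↑) : ℕ → ℕ∞)).inf

/-- Q₄(m,n): triples (j, α, β) with j ≥ 1, parts of α at most m+j, parts of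
β at most j, |α|+|β|+j(m+j) = n, β₁ = j, ℓ(β) ≥ ℓ(α)+1, α₁ = m+j > α₂ and
s(β) ≥ 2. -/
def Q4 (m n : ℕ) : Set (ℕ × Multiset ℕ × Multiset ℕ) :=
  {x | 1 ≤ x.1 ∧ (∀ a ∈ x.2.1, 0 < a) ∧ (∀ a ∈ x.2.2, 0 < a) ∧
       (∀ a ∈ x.2.1, a ≤ m + x.1) ∧ (∀ a ∈ x.2.2, a ≤ x.1) ∧
       x.2.1.sum + x.2.2.sum + x.1 * (m + x.1) = n ∧
       partAt x.2.2 1 = x.1 ∧ Multiset.card x.2.1 + 1 ≤ Multiset.card x.2.2 ∧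
       partAt x.2.1 1 = m + x.1 ∧ partAt x.2.1 2 < m + x.1 ∧ 2 ≤ sMin x.2.2}

/-- P₄(-m,n): triples (j', γ, δ) with j' ≥ 1, parts of γ at most m+j', parts
of δ at most j', |γ|+|δ|+j'(m+j') = n, ℓ(γ) = ℓ(δ), γ₁ = m+j'-1, δ₁ = j'
and δ has a part equal to 2. -/
def P4 (m n : ℕ) : Set (ℕ × Multiset ℕ × Multiset ℕ) :=
  {x | 1 ≤ x.1 ∧ (∀ a ∈ x.2.1, 0 < a) ∧ (∀ a ∈ x.2.2, 0 < a) ∧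
       (∀ a ∈ x.2.1, a ≤ m + x.1) ∧ (∀ a ∈ x.2.2, a ≤ x.1) ∧
       x.2.1.sum + x.2.2.sum + x.1 * (m + x.1) = n ∧
       Multiset.card x.2.1 = Multiset.card x.2.2 ∧
       (partAt x.2.1 1 : ℤ) = (m : ℤ) + (x.1 : ℤ) - 1 ∧
       partAt x.2.2 1 = x.1 ∧ 2 ∈ x.2.2}

namespace PartAtLemmas

lemma partAt_eq_zero {mu : Multiset ℕ} {i : ℕ} (h : Multiset.card mu < i) :
    partAt mu i = 0 := by
  unfold partAt
  apply List.getD_eq_default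
  rw [Multiset.length_sort]
  omega

lemma partAt_mem {mu : Multiset ℕ} {i : ℕ} (h1 : 1 ≤ i) (h2 : i ≤ Multiset.card mu) :
    partAt mu i ∈ mu := by
  unfold partAt
  have hlen : i - 1 < (mu.sort (· ≥ ·)).length := by rw [Multiset.length_sort]; omega
  rw [List.getD_eq_getElem _ _ hlen]
  have := List.getElem_mem hlen
  rwa [← Multiset.mem_sort (· ≥ ·)]

lemma partAt_anti {mu : Multiset ℕ} {i k : ℕ} (h1 : 1 ≤ i) (h2 : i ≤ k) :
    partAt mu k ≤ partAt mu i := by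
  rcases le_or_gt k (Multiset.card mu) with hk | hk
  · unfold partAt
    have hlk : k - 1 < (mu.sort (· ≥ ·)).length := by rw [Multiset.length_sort]; omega
    have hli : i - 1 < (mu.sort (· ≥ ·)).length := by rw [Multiset.length_sort]; omega
    rw [List.getD_eq_getElem _ _ hlk, List.getD_eq_getElem _ _ hli]
    rcases eq_or_lt_of_le h2 with rfl | hlt
    · rfl
    · have hs := Multiset.pairwise_sort mu (· ≥ ·)
      exact List.Pairwise.rel_get_of_lt hs (by simpa using by omega)
  · rw [partAt_eq_zero hk]; omega

lemma le_partAt_one {mu : Multiset ℕ} {y : ℕ} (h : y ∈ mu) : y ≤ partAt mu 1 := by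
  unfold partAt
  rw [← Multiset.mem_sort (· ≥ ·)] at h
  rcases hL : mu.sort (· ≥ ·) with _ | ⟨a, l⟩
  · rw [hL] at h; simp at h
  · rw [hL] at h
    have hs := Multiset.pairwise_sort mu (· ≥ ·)
    rw [hL, List.pairwise_cons] at hs
    simp only [List.mem_cons] at h
    rcases h with rfl | h
    · simp
    · simpa using hs.1 y h

lemma partAt_one_eq {mu : Multiset ℕ} {c : ℕ} (hc : c ∈ mu) (hall : ∀ y ∈ mu, y ≤ c) :
    partAt mu 1 = c := by
  have h1 : 1 ≤ Multiset.card mu := Multiset.card_pos_iff_exists_mem.2 ⟨c, hc⟩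
  exact le_antisymm (hall _ (partAt_mem le_rfl h1)) (le_partAt_one hc)

lemma le_partAt_two {mu : Multiset ℕ} {y : ℕ} (h : y ∈ mu.erase (partAt mu 1)) :
    y ≤ partAt mu 2 := by
  have hmu : mu = ↑(mu.sort (· ≥ ·)) := (Multiset.sort_eq _ _).symm
  rcases hL : mu.sort (· ≥ ·) with _ | ⟨a, l⟩
  · rw [hmu, hL] at h; simp at h
  · have hp1 : partAt mu 1 = a := by unfold partAt; rw [hL]; rfl
    rw [hp1, hmu, hL] at h
    rw [Multiset.coe_erase] at h
    rw [List.erase_cons_head] at h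
    have hs := Multiset.pairwise_sort mu (· ≥ ·)
    rw [hL, List.pairwise_cons] at hs
    have hp2 : partAt mu 2 = l.getD 0 0 := by unfold partAt; rw [hL]; rfl
    rw [hp2]
    rcases hl : l with _ | ⟨b, l2⟩
    · rw [hl] at h; simp at h
    · rw [hl] at h
      simp only [Multiset.mem_coe, List.mem_cons] at h
      rcases h with rfl | h
      · simp
      · have hs2 := hs.2
        rw [hl, List.pairwise_cons] at hs2
        simpa using hs2.1 y h

end PartAtLemmas

section Part2
open PartAtLemmas
namespace PartAtLemmas

lemma anti_of_step {f : ℕ → ℕ} {k : ℕ} (hf : ∀ i, 1 ≤ i → i < k → f (i + 1) ≤ f i) :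
    ∀ i j, 1 ≤ i → i ≤ j → j ≤ k → f j ≤ f i := by
  have key : ∀ d i, 1 ≤ i → i + d ≤ k → f (i + d) ≤ f i := by
    intro d
    induction d with
    | zero => intro i _ _; simp
    | succ d ih =>
      intro i hi hik
      have h1 : f (i + d + 1) ≤ f (i + d) := hf (i + d) (by omega) (by omega)
      have h2 : f (i + d) ≤ f i := ih i hi (by omega)
      calc f (i + (d+1)) = f (i + d + 1) := by ring_nf
        _ ≤ f (i + d) := h1
        _ ≤ f i := h2
  intro i j h1 h2 h3
  have := key (j - i) i h1 (by omega)
  have hji : i + (j - i) = j := by omega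
  rwa [hji] at this

lemma sorted_map_range {f : ℕ → ℕ} {k : ℕ} (hf : ∀ i, 1 ≤ i → i < k → f (i + 1) ≤ f i) :
    List.Pairwise (· ≥ ·) ((List.range k).map (fun i => f (i + 1))) := by
  rw [List.pairwise_iff_getElem]
  intro i j hi hj hij
  simp only [List.getElem_map, List.getElem_range]
  simp only [List.length_map, List.length_range] at hi hj
  exact anti_of_step hf (i+1) (j+1) (by omega) (by omega) (by omega)

lemma partAt_map_range {f : ℕ → ℕ} {k : ℕ} (hf : ∀ i, 1 ≤ i → i < k → f (i + 1) ≤ f i)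
    {i : ℕ} (h1 : 1 ≤ i) (h2 : i ≤ k) :
    partAt ((Multiset.range k).map (fun i => f (i + 1))) i = f i := by
  set L := (List.range k).map (fun i => f (i + 1)) with hLdef
  have hcoe : (↑L : Multiset ℕ) = (Multiset.range k).map (fun i => f (i + 1)) := by
    rw [hLdef, Multiset.range]
    rfl
  have hsort : Multiset.sort ((Multiset.range k).map (fun i => f (i + 1))) (· ≥ ·) = L := by
    refine (fun hp h1 h2 => List.Perm.eq_of_pairwise' (r := (· ≥ ·)) h1 h2 hp) ?_ ?_ ?_
    · apply Multiset.coe_eq_coe.mp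
      rw [Multiset.sort_eq, hcoe]
    · exact Multiset.pairwise_sort _ _
    · exact sorted_map_range hf
  unfold partAt
  rw [hsort]
  have hlen : i - 1 < L.length := by
    rw [hLdef]; simp only [List.length_map, List.length_range]; omega
  rw [List.getD_eq_getElem _ _ hlen]
  simp only [hLdef, List.getElem_map, List.getElem_range]
  congr 1
  omega

lemma map_range_card_eq_sort {mu : Multiset ℕ} :
    (List.range (Multiset.card mu)).map (fun i => partAt mu (i + 1)) = mu.sort (· ≥ ·) := by
  apply List.ext_getElem
  · simp [Multiset.length_sort]
  · intro i hi hi2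
    simp only [List.getElem_map, List.getElem_range]
    unfold partAt
    rw [List.getD_eq_getElem _ _ (by rw [Multiset.length_sort]; simp only [List.length_map, List.length_range] at hi; omega)]
    simp

lemma mu_eq_map_range {mu : Multiset ℕ} : ((Multiset.range (Multiset.card mu)).map (fun i => partAt mu (i + 1))) = mu := by
  have h1 : ((Multiset.range (Multiset.card mu)).map (fun i => partAt mu (i + 1))) = ((List.range (Multiset.card mu)).map (fun i => partAt mu (i + 1)) : List ℕ) := by
    rw [Multiset.range]; rfl
  rw [h1, map_range_card_eq_sort, Multiset.sort_eq]

lemma sum_partAt {mu : Multiset ℕ} {k : ℕ} (hk : Multiset.card mu ≤ k) :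
    ∑ i ∈ Finset.range k, partAt mu (i + 1) = mu.sum := by
  have h1 : ∑ i ∈ Finset.range (Multiset.card mu), partAt mu (i + 1) = mu.sum := by
    conv_rhs => rw [← mu_eq_map_range (mu := mu)]
    rw [Finset.sum]
    rw [Finset.range_val]
  rw [← h1]
  symm
  apply Finset.sum_subset (Finset.range_subset_range.2 hk)
  intro x _ hx
  simp only [Finset.mem_range, not_lt] at hx
  exact partAt_eq_zero (by omega)

end PartAtLemmas
end Part2
namespace PartAtLemmas

lemma partAt_le_of_forall {mu : Multiset ℕ} {c : ℕ} (hc : ∀ y ∈ mu, y ≤ c) (i : ℕ) :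
    partAt mu i ≤ c := by
  suffices H : ∀ k, 1 ≤ k → partAt mu k ≤ c by
    rcases i with _ | i
    · exact H 1 le_rfl
    · exact H (i+1) (by omega)
  intro k hk
  by_cases hck : k ≤ Multiset.card mu
  · exact hc _ (partAt_mem hk hck)
  · rw [partAt_eq_zero (by omega)]; omega

lemma two_le_of_sMin {β : Multiset ℕ} (h : 2 ≤ sMin β) : ∀ y ∈ β, 2 ≤ y := by
  intro y hy
  have h2 : sMin β ≤ (y : ℕ∞) :=
    Multiset.inf_le (Multiset.mem_map_of_mem _ hy)
  have : (2 : ℕ∞) ≤ (y : ℕ∞) := le_trans h h2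
  exact_mod_cast this

end PartAtLemmas

open PartAtLemmas

/-- `a`-sequence: parts of α with the distinguished `m+j` removed. -/
def Qa (m : ℕ) (x : ℕ × Multiset ℕ × Multiset ℕ) (i : ℕ) : ℕ :=
  partAt (x.2.1.erase (m + x.1)) i

/-- `e`-sequence: parts of β minus one copy of `j`, each reduced by 2; with virtual head `j-2`. -/
def Qe (x : ℕ × Multiset ℕ × Multiset ℕ) (i : ℕ) : ℕ :=
  if i = 0 then x.1 - 2 else partAt (x.2.2.erase x.1) i - 2

def Qv (x : ℕ × Multiset ℕ × Multiset ℕ) : ℕ := Multiset.card x.2.2 - 2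

def Qt (m : ℕ) (x : ℕ × Multiset ℕ × Multiset ℕ) : ℕ :=
  sInf {t | Qa m x (t + 1) ≤ Qe x t + 1}

def Qphi (m : ℕ) (x : ℕ × Multiset ℕ × Multiset ℕ) (i : ℕ) : ℕ :=
  if i ≤ Qt m x then Qa m x i - 1 else Qe x i

def Qpsi (m : ℕ) (x : ℕ × Multiset ℕ × Multiset ℕ) (i : ℕ) : ℕ :=
  if i ≤ Qt m x then Qe x i + 1 else Qa m x i

def Fmap (m : ℕ) (x : ℕ × Multiset ℕ × Multiset ℕ) : ℕ × Multiset ℕ × Multiset ℕ :=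
  (x.1,
   (m + x.1 - 1) ::ₘ (Multiset.range (Qv x + 1)).map (fun i => Qphi m x (i + 1) + 1),
   x.1 ::ₘ (2 : ℕ) ::ₘ (Multiset.range (Qv x)).map (fun i => Qpsi m x (i + 1) + 1))

section Facts

variable {m n : ℕ} {x : ℕ × Multiset ℕ × Multiset ℕ}

/-- All the basic structural facts we need about an element of Q4. -/
lemma qfacts (hx : x ∈ Q4 m n) :
    2 ≤ x.1 ∧ (m + x.1) ∈ x.2.1 ∧ x.1 ∈ x.2.2 ∧
    1 ≤ Multiset.card x.2.1 ∧ 2 ≤ Multiset.card x.2.2 ∧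
    Multiset.card (x.2.1.erase (m + x.1)) ≤ Qv x ∧
    Multiset.card (x.2.2.erase x.1) = Qv x + 1 ∧
    (∀ y ∈ x.2.1.erase (m + x.1), y ≤ m + x.1 - 1) ∧
    (∀ y ∈ x.2.2.erase x.1, 2 ≤ y ∧ y ≤ x.1) := by
  obtain ⟨hj, hapos, hbpos, hacap, hbcap, hsum, hb1, hcard, ha1, ha2, hmin⟩ := hx
  have hb2 := two_le_of_sMin hmin
  have hcb : 1 ≤ Multiset.card x.2.2 := by
    have := hcard; omega
  have hjin : x.1 ∈ x.2.2 := by rw [← hb1]; exact partAt_mem le_rfl hcb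
  have hj2 : 2 ≤ x.1 := hb2 _ hjin
  have hca : 1 ≤ Multiset.card x.2.1 := by
    by_contra h
    have h0 : x.2.1 = 0 := by
      rw [← Multiset.card_eq_zero]; omega
    rw [h0] at ha1
    have : partAt (0 : Multiset ℕ) 1 = 0 := by
      rw [partAt_eq_zero]; simp
    omega
  have hain : (m + x.1) ∈ x.2.1 := by rw [← ha1]; exact partAt_mem le_rfl hca
  have hcb2 : 2 ≤ Multiset.card x.2.2 := by omega
  refine ⟨hj2, hain, hjin, hca, hcb2, ?_, ?_, ?_, ?_⟩
  · rw [Multiset.card_erase_of_mem hain, Qv, Nat.pred_eq_sub_one]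
    omega
  · rw [Multiset.card_erase_of_mem hjin, Qv, Nat.pred_eq_sub_one]
    omega
  · intro y hy
    have h2 := le_partAt_two (mu := x.2.1) (y := y) (by rwa [ha1])
    omega
  · intro y hy
    have hyb := Multiset.mem_of_mem_erase hy
    exact ⟨hb2 _ hyb, hbcap _ hyb⟩

lemma qt_spec (hx : x ∈ Q4 m n) :
    Qt m x ≤ Qv x ∧ Qa m x (Qt m x + 1) ≤ Qe x (Qt m x) + 1 ∧
    (∀ s, s < Qt m x → Qe x s + 1 < Qa m x (s + 1)) := by
  obtain ⟨-, -, -, -, -, hac, -, -, -⟩ := qfacts hx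
  have hPv : Qa m x (Qv x + 1) ≤ Qe x (Qv x) + 1 := by
    have : Qa m x (Qv x + 1) = 0 := partAt_eq_zero (by omega)
    omega
  have hne : {t | Qa m x (t + 1) ≤ Qe x t + 1}.Nonempty := ⟨Qv x, hPv⟩
  refine ⟨Nat.sInf_le hPv, Nat.sInf_mem hne, ?_⟩
  intro s hs
  have := Nat.notMem_of_lt_sInf (s := {t | Qa m x (t + 1) ≤ Qe x t + 1}) hs
  simp only [Set.mem_setOf_eq, not_le] at this
  omega

end Facts
section SeqFacts

variable {m n : ℕ} {x : ℕ × Multiset ℕ × Multiset ℕ}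

lemma qa_cap (hx : x ∈ Q4 m n) : ∀ i, Qa m x i ≤ m + x.1 - 1 := by
  obtain ⟨-, -, -, -, -, -, -, hcap, -⟩ := qfacts hx
  intro i
  exact partAt_le_of_forall hcap i

lemma qa_anti : ∀ i k, 1 ≤ i → i ≤ k → Qa m x k ≤ Qa m x i := by
  intro i k h1 h2; exact partAt_anti h1 h2

lemma qe_cap (hx : x ∈ Q4 m n) : ∀ i, Qe x i ≤ x.1 - 2 := by
  obtain ⟨-, -, -, -, -, -, -, -, hb⟩ := qfacts hx
  intro i
  unfold Qe
  split
  · exact le_rfl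
  · have : partAt (x.2.2.erase x.1) i ≤ x.1 := partAt_le_of_forall (fun y hy => (hb y hy).2) i
    omega

lemma qe_anti (hx : x ∈ Q4 m n) : ∀ i k, i ≤ k → Qe x k ≤ Qe x i := by
  obtain ⟨-, -, -, -, -, -, -, -, hb⟩ := qfacts hx
  intro i k hik
  rcases Nat.eq_zero_or_pos i with rfl | hi
  · have h2 : Qe x k ≤ x.1 - 2 := qe_cap hx k
    have h0 : Qe x 0 = x.1 - 2 := by unfold Qe; simp
    omega
  · unfold Qe
    rw [if_neg (by omega), if_neg (by omega)]
    exact Nat.sub_le_sub_right (partAt_anti hi hik) 2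

lemma qe_two (hx : x ∈ Q4 m n) :
    ∀ i, 1 ≤ i → i ≤ Qv x + 1 → Qe x i + 2 = partAt (x.2.2.erase x.1) i := by
  obtain ⟨-, -, -, -, -, -, hcb, -, hb⟩ := qfacts hx
  intro i h1 h2
  have hmem : partAt (x.2.2.erase x.1) i ∈ x.2.2.erase x.1 := partAt_mem h1 (by omega)
  have := (hb _ hmem).1
  unfold Qe
  rw [if_neg (by omega)]
  omega

end SeqFacts
section PhiPsi

variable {m n : ℕ} {x : ℕ × Multiset ℕ × Multiset ℕ}

lemma qa_big (hx : x ∈ Q4 m n) :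
    ∀ i, 1 ≤ i → i ≤ Qt m x → Qe x (i - 1) + 2 ≤ Qa m x i := by
  intro i h1 h2
  obtain ⟨-, -, hmin⟩ := qt_spec hx
  have := hmin (i - 1) (by omega)
  have hi : i - 1 + 1 = i := by omega
  rw [hi] at this
  omega

lemma phi_step (hx : x ∈ Q4 m n) : ∀ i, 1 ≤ i → Qphi m x (i + 1) ≤ Qphi m x i := by
  intro i hi
  unfold Qphi
  by_cases h1 : i + 1 ≤ Qt m x
  · rw [if_pos h1, if_pos (by omega)]
    exact Nat.sub_le_sub_right (qa_anti i (i+1) hi (by omega)) 1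
  · by_cases h2 : i ≤ Qt m x
    · -- i = t
      rw [if_neg h1, if_pos h2]
      have ht : i = Qt m x := by omega
      have hbig := qa_big hx i hi h2
      have hanti : Qe x (i + 1) ≤ Qe x (i - 1) := qe_anti hx (i-1) (i+1) (by omega)
      omega
    · rw [if_neg h1, if_neg h2]
      exact qe_anti hx i (i+1) (by omega)

lemma psi_step (hx : x ∈ Q4 m n) : ∀ i, 1 ≤ i → Qpsi m x (i + 1) ≤ Qpsi m x i := by
  intro i hi
  unfold Qpsi
  by_cases h1 : i + 1 ≤ Qt m x
  · rw [if_pos h1, if_pos (by omega)]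
    have := qe_anti hx i (i+1) (by omega)
    omega
  · by_cases h2 : i ≤ Qt m x
    · rw [if_neg h1, if_pos h2]
      have ht : i = Qt m x := by omega
      obtain ⟨-, hmem, -⟩ := qt_spec hx
      rw [← ht] at hmem
      exact hmem
    · rw [if_neg h1, if_neg h2]
      exact qa_anti i (i+1) hi (by omega)

lemma phi_cap (hx : x ∈ Q4 m n) : ∀ i, 1 ≤ i → Qphi m x i + 1 ≤ m + x.1 - 1 := by
  intro i hi
  obtain ⟨hj2, -⟩ := qfacts hx
  unfold Qphi
  by_cases h : i ≤ Qt m x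
  · rw [if_pos h]
    have h1 := qa_big hx i hi h
    have h2 := qa_cap hx i
    omega
  · rw [if_neg h]
    have := qe_cap hx i
    omega

lemma psi_cap (hx : x ∈ Q4 m n) : ∀ i, 1 ≤ i → Qpsi m x i + 1 ≤ x.1 := by
  intro i hi
  obtain ⟨hj2, -⟩ := qfacts hx
  unfold Qpsi
  by_cases h : i ≤ Qt m x
  · rw [if_pos h]
    have := qe_cap hx i
    omega
  · rw [if_neg h]
    obtain ⟨-, hmem, -⟩ := qt_spec hx
    have h1 : Qa m x i ≤ Qa m x (Qt m x + 1) := qa_anti (Qt m x + 1) i (by omega) (by omega)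
    have h2 := qe_cap hx (Qt m x)
    omega

end PhiPsi
namespace PartAtLemmas
lemma msum_range (k : ℕ) (f : ℕ → ℕ) :
    ((Multiset.range k).map f).sum = ∑ i ∈ Finset.range k, f i := by
  rw [Finset.sum, Finset.range_val]
end PartAtLemmas

section Mem

variable {m n : ℕ} {x : ℕ × Multiset ℕ × Multiset ℕ}

lemma fmap_mem (hx : x ∈ Q4 m n) : Fmap m x ∈ P4 m n := by
  obtain ⟨hj, hapos, hbpos, hacap, hbcap, hsum, hb1, hcard, ha1, ha2, hmin⟩ := id hx
  obtain ⟨hj2, hain, hjin, hca, hcb, hacard, hbcard, hacapM, hbfact⟩ := qfacts hx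
  obtain ⟨htv, htmem, htmin⟩ := qt_spec hx
  set v := Qv x with hv
  -- the two output multisets
  set γ : Multiset ℕ :=
    (m + x.1 - 1) ::ₘ (Multiset.range (v + 1)).map (fun i => Qphi m x (i + 1) + 1) with hγ
  set δ : Multiset ℕ :=
    x.1 ::ₘ (2 : ℕ) ::ₘ (Multiset.range v).map (fun i => Qpsi m x (i + 1) + 1) with hδ
  have hγall : ∀ y ∈ γ, y ≤ m + x.1 - 1 := by
    intro y hy
    rcases Multiset.mem_cons.1 hy with rfl | hy
    · exact le_rfl
    · obtain ⟨i, hi, rfl⟩ := Multiset.mem_map.1 hy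
      exact phi_cap hx (i + 1) (by omega)
  have hδall : ∀ y ∈ δ, y ≤ x.1 := by
    intro y hy
    rcases Multiset.mem_cons.1 hy with rfl | hy
    · exact le_rfl
    · rcases Multiset.mem_cons.1 hy with rfl | hy
      · omega
      · obtain ⟨i, hi, rfl⟩ := Multiset.mem_map.1 hy
        exact psi_cap hx (i + 1) (by omega)
  have hγ1 : partAt γ 1 = m + x.1 - 1 :=
    partAt_one_eq (Multiset.mem_cons_self _ _) hγall
  have hδ1 : partAt δ 1 = x.1 :=
    partAt_one_eq (Multiset.mem_cons_self _ _) hδall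
  -- sums
  have hAB : ∑ i ∈ Finset.range v, Qa m x (i + 1) = (x.2.1.erase (m + x.1)).sum :=
    sum_partAt hacard
  have hE : ∑ i ∈ Finset.range (v + 1), (Qe x (i + 1) + 2) = (x.2.2.erase x.1).sum := by
    rw [Finset.sum_congr rfl (fun i hi => by
      have hiv : i < v + 1 := Finset.mem_range.1 hi
      exact qe_two hx (i + 1) (by omega) (by omega))]
    exact sum_partAt (le_of_eq hbcard)
  have hE2 : ∑ i ∈ Finset.range (v + 1), (Qe x (i + 1) + 2)
      = (∑ i ∈ Finset.range (v + 1), Qe x (i + 1)) + 2 * (v + 1) := by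
    rw [Finset.sum_add_distrib, Finset.sum_const, Finset.card_range]
    ring
  have hPhiPsi : ∀ i ∈ Finset.range v,
      Qphi m x (i + 1) + Qpsi m x (i + 1) = Qa m x (i + 1) + Qe x (i + 1) := by
    intro i _
    unfold Qphi Qpsi
    by_cases h : i + 1 ≤ Qt m x
    · rw [if_pos h, if_pos h]
      have := qa_big hx (i + 1) (by omega) h
      omega
    · rw [if_neg h, if_neg h]
      omega
  have hφv : Qphi m x (v + 1) = Qe x (v + 1) := by
    unfold Qphi
    rw [if_neg (by omega)]
  have hsum2 : (∑ i ∈ Finset.range (v + 1), Qphi m x (i + 1))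
      + (∑ i ∈ Finset.range v, Qpsi m x (i + 1))
      = (∑ i ∈ Finset.range v, Qa m x (i + 1))
        + (∑ i ∈ Finset.range (v + 1), Qe x (i + 1)) := by
    rw [Finset.sum_range_succ (f := fun i => Qphi m x (i + 1)),
        Finset.sum_range_succ (f := fun i => Qe x (i + 1)), hφv]
    have hc := Finset.sum_congr rfl hPhiPsi
    rw [Finset.sum_add_distrib, Finset.sum_add_distrib] at hc
    omega
  have hαsum : (m + x.1) + (x.2.1.erase (m + x.1)).sum = x.2.1.sum :=
    Multiset.sum_erase hain
  have hβsum : x.1 + (x.2.2.erase x.1).sum = x.2.2.sum :=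
    Multiset.sum_erase hjin
  have hγs : γ.sum = (m + x.1 - 1) + ((∑ i ∈ Finset.range (v + 1), Qphi m x (i + 1)) + (v + 1)) := by
    rw [hγ, Multiset.sum_cons, msum_range]
    rw [Finset.sum_add_distrib, Finset.sum_const, Finset.card_range]
    simp [mul_comm]
  have hδs : δ.sum = x.1 + (2 + ((∑ i ∈ Finset.range v, Qpsi m x (i + 1)) + v)) := by
    rw [hδ, Multiset.sum_cons, Multiset.sum_cons, msum_range]
    rw [Finset.sum_add_distrib, Finset.sum_const, Finset.card_range]
    simp [mul_comm]
  have hFm : Fmap m x = (x.1, γ, δ) := rfl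
  rw [hFm]
  show 1 ≤ x.1 ∧ (∀ a ∈ γ, 0 < a) ∧ (∀ a ∈ δ, 0 < a) ∧ (∀ a ∈ γ, a ≤ m + x.1) ∧
    (∀ a ∈ δ, a ≤ x.1) ∧ γ.sum + δ.sum + x.1 * (m + x.1) = n ∧
    Multiset.card γ = Multiset.card δ ∧ (partAt γ 1 : ℤ) = (m : ℤ) + (x.1 : ℤ) - 1 ∧
    partAt δ 1 = x.1 ∧ 2 ∈ δ
  refine ⟨hj, ?_, ?_, ?_, ?_, ?_, ?_, ?_, ?_, ?_⟩
  · -- γ positive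
    intro y hy
    rcases Multiset.mem_cons.1 hy with rfl | hy
    · omega
    · obtain ⟨i, hi, rfl⟩ := Multiset.mem_map.1 hy
      omega
  · -- δ positive
    intro y hy
    rcases Multiset.mem_cons.1 hy with rfl | hy
    · omega
    · rcases Multiset.mem_cons.1 hy with rfl | hy
      · omega
      · obtain ⟨i, hi, rfl⟩ := Multiset.mem_map.1 hy
        omega
  · -- γ cap
    intro y hy
    have := hγall y hy
    omega
  · -- δ cap
    exact hδall
  · -- sum equation
    show γ.sum + δ.sum + x.1 * (m + x.1) = n
    rw [hγs, hδs]
    omega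
  · -- card
    show Multiset.card γ = Multiset.card δ
    rw [hγ, hδ]
    simp [Multiset.card_cons, Multiset.card_map, Multiset.card_range]
  · -- partAt γ 1 over ℤ
    show (partAt γ 1 : ℤ) = (m : ℤ) + (x.1 : ℤ) - 1
    rw [hγ1]
    have h1 : 1 ≤ m + x.1 := by omega
    rw [Nat.cast_sub h1]
    push_cast
    ring
  · -- partAt δ 1
    exact hδ1
  · -- 2 ∈ δ
    exact Multiset.mem_cons_of_mem (Multiset.mem_cons_self _ _)

end Mem
section Inj

variable {m n : ℕ} {x y : ℕ × Multiset ℕ × Multiset ℕ}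

lemma qt_not_lt (hx : x ∈ Q4 m n) (hy : y ∈ Q4 m n) (hj : x.1 = y.1) (hv : Qv x = Qv y)
    (hφ : ∀ i, 1 ≤ i → i ≤ Qv x + 1 → Qphi m x i = Qphi m y i)
    (hψ : ∀ i, 1 ≤ i → i ≤ Qv x → Qpsi m x i = Qpsi m y i) :
    ¬ (Qt m x < Qt m y) := by
  intro hlt
  obtain ⟨htvx, htmemx, -⟩ := qt_spec hx
  obtain ⟨htvy, -, htminy⟩ := qt_spec hy
  obtain ⟨hj2x, -⟩ := qfacts hx
  set tx := Qt m x with htx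
  rcases Nat.eq_zero_or_pos tx with ht0 | ht1
  · -- tx = 0
    have h1 : Qphi m x 1 = Qe x 1 := by
      unfold Qphi; rw [if_neg (by omega)]
    have h2 : Qphi m y 1 = Qa m y 1 - 1 := by
      unfold Qphi; rw [if_pos (by omega)]
    have h3 : Qe y 0 + 1 < Qa m y 1 := by simpa using htminy 0 (by omega)
    have h4 : Qe y 0 = y.1 - 2 := by unfold Qe; simp
    have h5 : Qe x 1 ≤ x.1 - 2 := qe_cap hx 1
    have h6 := hφ 1 le_rfl (by omega)
    rw [← hj] at h4
    omega
  · -- tx ≥ 1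
    have hφ1 : Qphi m x (tx + 1) = Qe x (tx + 1) := by
      unfold Qphi; rw [if_neg (by omega)]
    have hφ2 : Qphi m y (tx + 1) = Qa m y (tx + 1) - 1 := by
      unfold Qphi; rw [if_pos (by omega)]
    have hψ1 : Qpsi m x tx = Qe x tx + 1 := by
      unfold Qpsi; rw [if_pos (by omega)]
    have hψ2 : Qpsi m y tx = Qe y tx + 1 := by
      unfold Qpsi; rw [if_pos (by omega)]
    have hanti : Qe x (tx + 1) ≤ Qe x tx := qe_anti hx tx (tx + 1) (by omega)
    have hm := htminy tx hlt
    have he1 := hφ (tx + 1) (by omega) (by omega)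
    have he2 := hψ tx (by omega) (by omega)
    omega

lemma fmap_inj (hx : x ∈ Q4 m n) (hy : y ∈ Q4 m n) (h : Fmap m x = Fmap m y) : x = y := by
  obtain ⟨hj2x, hainx, hjinx, hcax, hcbx, hacardx, hbcardx, hacapMx, hbfactx⟩ := qfacts hx
  obtain ⟨hj2y, hainy, hjiny, hcay, hcby, hacardy, hbcardy, hacapMy, hbfacty⟩ := qfacts hy
  have hj0 := congrArg Prod.fst h
  have hj : x.1 = y.1 := hj0
  have hγ : (m + x.1 - 1) ::ₘ (Multiset.range (Qv x + 1)).map (fun i => Qphi m x (i + 1) + 1)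
      = (m + y.1 - 1) ::ₘ (Multiset.range (Qv y + 1)).map (fun i => Qphi m y (i + 1) + 1) :=
    congrArg (fun z => z.2.1) h
  have hδ : x.1 ::ₘ (2 : ℕ) ::ₘ (Multiset.range (Qv x)).map (fun i => Qpsi m x (i + 1) + 1)
      = y.1 ::ₘ (2 : ℕ) ::ₘ (Multiset.range (Qv y)).map (fun i => Qpsi m y (i + 1) + 1) :=
    congrArg (fun z => z.2.2) h
  -- equal v
  have hv : Qv x = Qv y := by
    have hc := congrArg (fun z => Multiset.card z) hγ
    simpa [Multiset.card_cons, Multiset.card_map, Multiset.card_range] using hc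
  -- strip the cons
  have hγ2 : (Multiset.range (Qv x + 1)).map (fun i => Qphi m x (i + 1) + 1)
      = (Multiset.range (Qv x + 1)).map (fun i => Qphi m y (i + 1) + 1) := by
    have := congrArg (fun z => Multiset.erase z (m + x.1 - 1)) hγ
    rw [Multiset.erase_cons_head] at this
    rw [hj] at this
    rw [Multiset.erase_cons_head] at this
    rw [this, hv]
  have hδ2 : (Multiset.range (Qv x)).map (fun i => Qpsi m x (i + 1) + 1)
      = (Multiset.range (Qv x)).map (fun i => Qpsi m y (i + 1) + 1) := by
    have := congrArg (fun z => Multiset.erase (Multiset.erase z x.1) 2) hδ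
    rw [Multiset.erase_cons_head] at this
    rw [hj] at this
    rw [Multiset.erase_cons_head, Multiset.erase_cons_head, Multiset.erase_cons_head] at this
    rw [this, hv]
  -- recover the φ/ψ sequences
  have hφ : ∀ i, 1 ≤ i → i ≤ Qv x + 1 → Qphi m x i = Qphi m y i := by
    intro i h1 h2
    have e1 : partAt ((Multiset.range (Qv x + 1)).map (fun i => Qphi m x (i + 1) + 1)) i
        = Qphi m x i + 1 :=
      partAt_map_range (f := fun k => Qphi m x k + 1)
        (fun i hi _ => by show Qphi m x (i+1) + 1 ≤ Qphi m x i + 1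
                          have := phi_step hx i hi; omega) h1 h2
    have e2 : partAt ((Multiset.range (Qv x + 1)).map (fun i => Qphi m y (i + 1) + 1)) i
        = Qphi m y i + 1 :=
      partAt_map_range (f := fun k => Qphi m y k + 1)
        (fun i hi _ => by show Qphi m y (i+1) + 1 ≤ Qphi m y i + 1
                          have := phi_step hy i hi; omega) h1 h2
    rw [hγ2] at e1
    omega
  have hψ : ∀ i, 1 ≤ i → i ≤ Qv x → Qpsi m x i = Qpsi m y i := by
    intro i h1 h2
    have e1 : partAt ((Multiset.range (Qv x)).map (fun i => Qpsi m x (i + 1) + 1)) i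
        = Qpsi m x i + 1 :=
      partAt_map_range (f := fun k => Qpsi m x k + 1)
        (fun i hi _ => by show Qpsi m x (i+1) + 1 ≤ Qpsi m x i + 1
                          have := psi_step hx i hi; omega) h1 h2
    have e2 : partAt ((Multiset.range (Qv x)).map (fun i => Qpsi m y (i + 1) + 1)) i
        = Qpsi m y i + 1 :=
      partAt_map_range (f := fun k => Qpsi m y k + 1)
        (fun i hi _ => by show Qpsi m y (i+1) + 1 ≤ Qpsi m y i + 1
                          have := psi_step hy i hi; omega) h1 h2
    rw [hδ2] at e1
    omega
  -- t equal
  have hψ' : ∀ i, 1 ≤ i → i ≤ Qv y → Qpsi m y i = Qpsi m x i := by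
    intro i h1 h2; rw [hψ i h1 (by omega)]
  have hφ' : ∀ i, 1 ≤ i → i ≤ Qv y + 1 → Qphi m y i = Qphi m x i := by
    intro i h1 h2; rw [hφ i h1 (by omega)]
  have ht : Qt m x = Qt m y := by
    have h1 := qt_not_lt hx hy hj hv hφ hψ
    have h2 := qt_not_lt hy hx hj.symm hv.symm hφ' hψ'
    omega
  obtain ⟨htvx, -, -⟩ := qt_spec hx
  -- a sequences equal
  have hA : ∀ i, 1 ≤ i → Qa m x i = Qa m y i := by
    intro i h1
    by_cases hit : i ≤ Qt m x
    · have b1 := qa_big hx i h1 hit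
      have b2 := qa_big hy i h1 (by omega)
      have e1 : Qphi m x i = Qa m x i - 1 := by unfold Qphi; rw [if_pos hit]
      have e2 : Qphi m y i = Qa m y i - 1 := by unfold Qphi; rw [if_pos (by omega)]
      have := hφ i h1 (by omega)
      omega
    · by_cases hiv : i ≤ Qv x
      · have e1 : Qpsi m x i = Qa m x i := by unfold Qpsi; rw [if_neg hit]
        have e2 : Qpsi m y i = Qa m y i := by unfold Qpsi; rw [if_neg (by omega)]
        have := hψ i h1 hiv
        omega
      · have z1 : Qa m x i = 0 := partAt_eq_zero (by omega)
        have z2 : Qa m y i = 0 := partAt_eq_zero (by omega)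
        omega
  -- e sequences equal
  have hE : ∀ i, 1 ≤ i → i ≤ Qv x + 1 → Qe x i = Qe y i := by
    intro i h1 h2
    by_cases hit : i ≤ Qt m x
    · have e1 : Qpsi m x i = Qe x i + 1 := by unfold Qpsi; rw [if_pos hit]
      have e2 : Qpsi m y i = Qe y i + 1 := by unfold Qpsi; rw [if_pos (by omega)]
      have := hψ i h1 (by omega)
      omega
    · have e1 : Qphi m x i = Qe x i := by unfold Qphi; rw [if_neg hit]
      have e2 : Qphi m y i = Qe y i := by unfold Qphi; rw [if_neg (by omega)]
      have := hφ i h1 h2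
      omega
  -- recover β
  have hβ' : x.2.2.erase x.1 = y.2.2.erase y.1 := by
    have r1 := mu_eq_map_range (mu := x.2.2.erase x.1)
    have r2 := mu_eq_map_range (mu := y.2.2.erase y.1)
    rw [hbcardx] at r1
    rw [hbcardy, ← hv] at r2
    rw [← r1, ← r2]
    apply Multiset.map_congr rfl
    intro i hi
    have hiv : i < Qv x + 1 := by rwa [Multiset.mem_range] at hi
    have q1 := qe_two hx (i + 1) (by omega) (by omega)
    have q2 := qe_two hy (i + 1) (by omega) (by omega)
    have := hE (i + 1) (by omega) (by omega)
    omega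
  have hβ : x.2.2 = y.2.2 := by
    have c1 : x.1 ::ₘ x.2.2.erase x.1 = x.2.2 := Multiset.cons_erase hjinx
    have c2 : y.1 ::ₘ y.2.2.erase y.1 = y.2.2 := Multiset.cons_erase hjiny
    rw [← c1, ← c2, hβ', hj]
  -- recover α
  have hcard_eq : Multiset.card (x.2.1.erase (m + x.1)) = Multiset.card (y.2.1.erase (m + y.1)) := by
    by_contra hne
    obtain ⟨-, hapx, -⟩ := id hx
    obtain ⟨-, hapy, -⟩ := id hy
    rcases Nat.lt_or_ge (Multiset.card (x.2.1.erase (m + x.1))) (Multiset.card (y.2.1.erase (m + y.1))) with hlt | hge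
    · set c := Multiset.card (x.2.1.erase (m + x.1))
      have z1 : Qa m x (c + 1) = 0 := partAt_eq_zero (by omega)
      have mem2 : Qa m y (c + 1) ∈ y.2.1.erase (m + y.1) := partAt_mem (by omega) (by omega)
      have : 0 < Qa m y (c + 1) := hapy _ (Multiset.mem_of_mem_erase mem2)
      have := hA (c + 1) (by omega)
      omega
    · rcases Nat.lt_or_ge (Multiset.card (y.2.1.erase (m + y.1))) (Multiset.card (x.2.1.erase (m + x.1))) with hlt2 | hge2
      · set c := Multiset.card (y.2.1.erase (m + y.1))
        have z1 : Qa m y (c + 1) = 0 := partAt_eq_zero (by omega)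
        have mem2 : Qa m x (c + 1) ∈ x.2.1.erase (m + x.1) := partAt_mem (by omega) (by omega)
        have : 0 < Qa m x (c + 1) := hapx _ (Multiset.mem_of_mem_erase mem2)
        have := hA (c + 1) (by omega)
        omega
      · omega
  have hα' : x.2.1.erase (m + x.1) = y.2.1.erase (m + y.1) := by
    have r1 := mu_eq_map_range (mu := x.2.1.erase (m + x.1))
    have r2 := mu_eq_map_range (mu := y.2.1.erase (m + y.1))
    rw [← hcard_eq] at r2
    rw [← r1, ← r2]
    apply Multiset.map_congr rfl
    intro i _
    exact hA (i + 1) (by omega)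
  have hα : x.2.1 = y.2.1 := by
    have c1 : (m + x.1) ::ₘ x.2.1.erase (m + x.1) = x.2.1 := Multiset.cons_erase hainx
    have c2 : (m + y.1) ::ₘ y.2.1.erase (m + y.1) = y.2.1 := Multiset.cons_erase hainy
    rw [← c1, ← c2, hα', hj]
  -- assemble
  have h2 : x.2 = y.2 := Prod.ext hα hβ
  exact Prod.ext hj h2

end Inj
section Fin

lemma multiset_bounded_finite (N : ℕ) :
    {μ : Multiset ℕ | μ.sum ≤ N ∧ ∀ y ∈ μ, 0 < y}.Finite := by
  have hsub : {μ : Multiset ℕ | μ.sum ≤ N ∧ ∀ y ∈ μ, 0 < y} ⊆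
      ⋃ k ∈ Finset.range (N + 1), Set.range (fun p : Nat.Partition k => p.parts) := by
    intro μ hμ
    obtain ⟨h1, h2⟩ := hμ
    apply Set.mem_biUnion (show μ.sum ∈ (↑(Finset.range (N + 1)) : Set ℕ) by
      simp only [Finset.coe_range, Set.mem_Iio]; omega)
    exact ⟨⟨μ, fun {i} hi => h2 i hi, rfl⟩, rfl⟩
  exact (Set.Finite.biUnion (Finset.range (N + 1)).finite_toSet
    (fun k _ => Set.finite_range _)).subset hsub

lemma p4_finite (m n : ℕ) : (P4 m n).Finite := by
  have hsub : P4 m n ⊆ (Set.Iic n) ×ˢ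
      ({μ : Multiset ℕ | μ.sum ≤ n ∧ ∀ y ∈ μ, 0 < y} ×ˢ
       {μ : Multiset ℕ | μ.sum ≤ n ∧ ∀ y ∈ μ, 0 < y}) := by
    intro z hz
    obtain ⟨h1, h2, h3, h4, h5, h6, h7, h8, h9, h10⟩ := hz
    have hmul : z.1 ≤ z.1 * (m + z.1) := Nat.le_mul_of_pos_right z.1 (by omega)
    refine ⟨?_, ⟨?_, h2⟩, ⟨?_, h3⟩⟩
    · simp only [Set.mem_Iic]; omega
    · omega
    · omega
  exact ((Set.finite_Iic n).prod ((multiset_bounded_finite n).prod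
    (multiset_bounded_finite n))).subset hsub

end Fin
/-- For all integers m ≥ 0 and n ≥ 0, #Q₄(m,n) ≤ #P₄(-m,n). -/
theorem Q4_card_le_P4_card (m n : ℕ) : Nat.card (Q4 m n) ≤ Nat.card (P4 m n) := by
  have hfin : (P4 m n).Finite := p4_finite m n
  have : Finite (P4 m n) := hfin.to_subtype
  exact Nat.card_le_card_of_injective
    (fun z : Q4 m n => (⟨Fmap m z.1, fmap_mem z.2⟩ : P4 m n))
    (fun z w hzw => Subtype.ext (fmap_inj z.2 w.2 (congrArg Subtype.val hzw)))
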